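/- arXiv:2009.02884 — 2 statements merged into one kernel-verified Lean document; each statement's English description precedes it below -/
import Mathlib

section
/- Let G be a non-abelian finite simple group in which every maximal subgroup has even order. Then the intersection graph Δ_G is connected with diameter at most 4. -/
/-- The intersection graph of a group `G`: vertices are the proper nontrivial subgroups
of `G`, with two distinct subgroups adjacent iff they intersect nontrivially. -/
def intersectionGraph (G : Type*) [Group G] :
    SimpleGraph {H : Subgroup G // H ≠ ⊥ ∧ H ≠ ⊤} where
  Adj S T := S ≠ T ∧ S.1 ⊓ T.1 ≠ ⊥
  symm := ⟨fun S T ⟨h1, h2⟩ => ⟨h1.symm, by rwa [inf_comm] at h2⟩⟩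
  loopless := ⟨fun S h => h.1 rfl⟩

private lemma walk_step {V : Type*} {G : SimpleGraph V} {u v y : V} {n : ℕ}
    (h : u = v ∨ G.Adj u v) (hp : ∃ w : G.Walk v y, w.length ≤ n) :
    ∃ w : G.Walk u y, w.length ≤ n + 1 := by
  obtain ⟨w, hw⟩ := hp
  rcases h with rfl | h
  · exact ⟨w, hw.trans (Nat.le_succ n)⟩
  · exact ⟨w.cons h, by simpa [SimpleGraph.Walk.length_cons] using Nat.succ_le_succ hw⟩

private lemma mem_normalizer_zpowers_of_conj_inv {G : Type*} [Group G] {x g : G}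
    (hg : g * x * g⁻¹ = x⁻¹) : g ∈ Subgroup.normalizer (Subgroup.zpowers x : Set G) := by
  have h4 : g⁻¹ * x⁻¹ * g = x := by rw [← hg]; group
  have h2 : g⁻¹ * x * g = x⁻¹ := by
    have h5 : (g⁻¹ * x⁻¹ * g)⁻¹ = x⁻¹ := congrArg (·⁻¹) h4
    rw [← h5]; group
  rw [Subgroup.mem_normalizer_iff]
  intro n
  constructor
  · rintro ⟨k, rfl⟩
    refine ⟨-k, ?_⟩
    show x ^ (-k) = g * x ^ k * g⁻¹
    have : g * x ^ k * g⁻¹ = (g * x * g⁻¹) ^ k := by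
      rw [conj_zpow]
    rw [this, hg, inv_zpow, ← zpow_neg]
  · rintro ⟨k, hk⟩
    have hk' : x ^ k = g * n * g⁻¹ := hk
    refine ⟨-k, ?_⟩
    show x ^ (-k) = n
    have hc : (g⁻¹ * x * g) ^ k = g⁻¹ * x ^ k * g := by
      have := conj_zpow (i := k) (a := g⁻¹) (b := x)
      simpa using this
    have hnk : x ^ (-k) = (x⁻¹) ^ k := by rw [inv_zpow, ← zpow_neg]
    rw [hnk, ← h2, hc, hk']
    group

/-- Let `G` be a non-abelian finite simple group in which every maximal subgroup has even
order. Then the intersection graph `Δ_G` is connected with diameter at most `4`. -/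
theorem intersectionGraph_diam_le_four_of_maximal_even
    (G : Type*) [Group G] [Finite G] [IsSimpleGroup G]
    (hna : ¬ ∀ a b : G, a * b = b * a)
    (hmax : ∀ M : Subgroup G, IsCoatom M → Even (Nat.card M)) :
    (intersectionGraph G).Connected ∧
      ∀ S T : {H : Subgroup G // H ≠ ⊥ ∧ H ≠ ⊤},
        (intersectionGraph G).dist S T ≤ 4 := by
  classical
  -- cyclic subgroups are proper
  have hcyc : ∀ x : G, Subgroup.zpowers x ≠ ⊤ := by
    intro x hx
    apply hna
    intro a b
    obtain ⟨m, rfl⟩ : a ∈ Subgroup.zpowers x := hx ▸ Subgroup.mem_top a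
    obtain ⟨n, rfl⟩ : b ∈ Subgroup.zpowers x := hx ▸ Subgroup.mem_top b
    exact ((Commute.refl x).zpow_zpow m n)
  -- maximal subgroups contain involutions
  have key : ∀ M : Subgroup G, IsCoatom M → ∃ t : G, t ∈ M ∧ t ≠ 1 ∧ t * t = 1 := by
    intro M hM
    have : Fact (Nat.Prime 2) := ⟨Nat.prime_two⟩
    obtain ⟨t, ht⟩ := exists_prime_orderOf_dvd_card' (G := M) 2 ((hmax M hM).two_dvd)
    have htt : t * t = 1 := by
      have := pow_orderOf_eq_one t
      rwa [ht, sq] at this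
    have ht1 : t ≠ 1 := by
      intro h
      rw [h, orderOf_one] at ht
      omega
    refine ⟨(t : G), t.2, ?_, ?_⟩
    · intro h
      exact ht1 (Subtype.ext (by simpa using h))
    · exact_mod_cast congrArg (Subtype.val) htt
  -- subgroups generated by two involutions are proper
  have hdih : ∀ t₁ t₂ : G, t₁ * t₁ = 1 → t₂ * t₂ = 1 →
      Subgroup.closure {t₁, t₂} ≠ ⊤ := by
    intro t₁ t₂ h1 h2 htop
    set x := t₁ * t₂ with hxdef
    have hi1 : t₁⁻¹ = t₁ := inv_eq_of_mul_eq_one_right h1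
    have hi2 : t₂⁻¹ = t₂ := inv_eq_of_mul_eq_one_right h2
    have hxinv : x⁻¹ = t₂ * t₁ := by rw [hxdef, mul_inv_rev, hi1, hi2]
    have hn : (Subgroup.zpowers x).Normal := by
      have hle : Subgroup.closure {t₁, t₂} ≤ Subgroup.normalizer (Subgroup.zpowers x : Set G) := by
        rw [Subgroup.closure_le]
        intro g hg
        simp only [Set.mem_insert_iff, Set.mem_singleton_iff] at hg
        rcases hg with h | h
        · rw [h]
          apply mem_normalizer_zpowers_of_conj_inv
          rw [hxinv, hxdef, hi1]
          have : t₁ * (t₁ * t₂) * t₁ = (t₁ * t₁) * (t₂ * t₁) := by group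
          rw [this, h1, one_mul]
        · rw [h]
          apply mem_normalizer_zpowers_of_conj_inv
          rw [hxinv, hxdef, hi2]
          have : t₂ * (t₁ * t₂) * t₂ = t₂ * t₁ * (t₂ * t₂) := by group
          rw [this, h2, mul_one]
      rw [htop] at hle
      exact Subgroup.normalizer_eq_top_iff.mp (top_le_iff.mp hle)
    rcases hn.eq_bot_or_eq_top with hb | ht
    · have hx1 : x = 1 := by
        have := Subgroup.mem_zpowers x
        rw [hb, Subgroup.mem_bot] at this
        exact this
      rw [hxdef] at hx1
      have ht21 : t₂ = t₁ := by
        rw [← hi1]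
        exact (inv_eq_of_mul_eq_one_right hx1).symm
      rw [ht21] at htop
      have : Subgroup.closure ({t₁} : Set G) = ⊤ := by
        rwa [Set.pair_eq_singleton] at htop
      rw [← Subgroup.zpowers_eq_closure] at this
      exact hcyc t₁ this
    · exact hcyc x ht
  -- for each vertex, a coatom above it with an involution
  have vert : ∀ S : {H : Subgroup G // H ≠ ⊥ ∧ H ≠ ⊤},
      ∃ (M : Subgroup G) (t : G), IsCoatom M ∧ S.1 ≤ M ∧ t ∈ M ∧ t ≠ 1 ∧ t * t = 1 := by
    intro S
    obtain ⟨M, hM, hSM⟩ := (eq_top_or_exists_le_coatom S.1).resolve_left S.2.2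
    obtain ⟨t, htM, ht1, htt⟩ := key M hM
    exact ⟨M, t, hM, hSM, htM, ht1, htt⟩
  -- main walk construction
  have main : ∀ S T : {H : Subgroup G // H ≠ ⊥ ∧ H ≠ ⊤},
      ∃ w : (intersectionGraph G).Walk S T, w.length ≤ 4 := by
    intro S T
    obtain ⟨M₁, t₁, hM₁, hSM₁, ht₁M, ht₁1, ht₁t⟩ := vert S
    obtain ⟨M₂, t₂, hM₂, hTM₂, ht₂M, ht₂1, ht₂t⟩ := vert T
    have hM₁bot : M₁ ≠ ⊥ := by
      intro h; rw [h, Subgroup.mem_bot] at ht₁M; exact ht₁1 ht₁M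
    have hM₂bot : M₂ ≠ ⊥ := by
      intro h; rw [h, Subgroup.mem_bot] at ht₂M; exact ht₂1 ht₂M
    set D := Subgroup.closure ({t₁, t₂} : Set G) with hD
    have ht₁D : t₁ ∈ D := Subgroup.subset_closure (Set.mem_insert _ _)
    have ht₂D : t₂ ∈ D := Subgroup.subset_closure (Set.mem_insert_of_mem _ rfl)
    have hDbot : D ≠ ⊥ := by
      intro h; rw [h, Subgroup.mem_bot] at ht₁D; exact ht₁1 ht₁D
    have hDtop : D ≠ ⊤ := hdih t₁ t₂ ht₁t ht₂t
    set vM₁ : {H : Subgroup G // H ≠ ⊥ ∧ H ≠ ⊤} := ⟨M₁, hM₁bot, hM₁.1⟩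
    set vM₂ : {H : Subgroup G // H ≠ ⊥ ∧ H ≠ ⊤} := ⟨M₂, hM₂bot, hM₂.1⟩
    set vD : {H : Subgroup G // H ≠ ⊥ ∧ H ≠ ⊤} := ⟨D, hDbot, hDtop⟩
    have inf_ne_bot : ∀ (A B : Subgroup G) (t : G), t ∈ A → t ∈ B → t ≠ 1 → A ⊓ B ≠ ⊥ := by
      intro A B t hA hB ht h
      have : t ∈ A ⊓ B := Subgroup.mem_inf.mpr ⟨hA, hB⟩
      rw [h, Subgroup.mem_bot] at this
      exact ht this
    have e1 : S = vM₁ ∨ (intersectionGraph G).Adj S vM₁ := by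
      by_cases h : S = vM₁
      · exact Or.inl h
      · refine Or.inr ⟨h, ?_⟩
        have : S.1 ⊓ M₁ = S.1 := inf_eq_left.mpr hSM₁
        rw [this]
        exact S.2.1
    have e2 : vM₁ = vD ∨ (intersectionGraph G).Adj vM₁ vD := by
      by_cases h : vM₁ = vD
      · exact Or.inl h
      · exact Or.inr ⟨h, inf_ne_bot _ _ t₁ ht₁M ht₁D ht₁1⟩
    have e3 : vD = vM₂ ∨ (intersectionGraph G).Adj vD vM₂ := by
      by_cases h : vD = vM₂
      · exact Or.inl h
      · exact Or.inr ⟨h, inf_ne_bot _ _ t₂ ht₂D ht₂M ht₂1⟩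
    have e4 : vM₂ = T ∨ (intersectionGraph G).Adj vM₂ T := by
      by_cases h : vM₂ = T
      · exact Or.inl h
      · refine Or.inr ⟨h, ?_⟩
        have : M₂ ⊓ T.1 = T.1 := inf_eq_right.mpr hTM₂
        rw [this]
        exact T.2.1
    have w0 : ∃ w : (intersectionGraph G).Walk T T, w.length ≤ 0 :=
      ⟨SimpleGraph.Walk.nil, le_rfl⟩
    exact walk_step e1 (walk_step e2 (walk_step e3 (walk_step e4 w0)))
  -- nonempty vertex type
  have hbt : (⊥ : Subgroup G) ≠ ⊤ := by
    intro h
    apply hna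
    intro a b
    have ha : a ∈ (⊥ : Subgroup G) := h ▸ Subgroup.mem_top a
    rw [Subgroup.mem_bot] at ha
    rw [ha, one_mul, mul_one]
  have hne : Nonempty {H : Subgroup G // H ≠ ⊥ ∧ H ≠ ⊤} := by
    obtain ⟨M, hM, _⟩ := (eq_top_or_exists_le_coatom (⊥ : Subgroup G)).resolve_left hbt
    obtain ⟨t, htM, ht1, _⟩ := key M hM
    have hMbot : M ≠ ⊥ := by
      intro h; rw [h, Subgroup.mem_bot] at htM; exact ht1 htM
    exact ⟨⟨M, hMbot, hM.1⟩⟩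
  have pre : (intersectionGraph G).Preconnected := by
    intro S T
    obtain ⟨w, _⟩ := main S T
    exact w.reachable
  haveI := hne
  refine ⟨⟨pre⟩, fun S T => ?_⟩
  obtain ⟨w, hw⟩ := main S T
  exact (SimpleGraph.dist_le w).trans hw
end

section
/- Let G be a non-abelian finite simple group and let M₁ and M₂ be distinct maximal subgroups of G, each of even order. Then d(M₁, M₂) ≤ 2 in the intersection graph Δ_G. -/
open Subgroup

lemma zpowers_ne_top_aux {G : Type*} [Group G]
    (hna : ¬ ∀ a b : G, a * b = b * a) (w : G) : Subgroup.zpowers w ≠ ⊤ := by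
  intro h
  apply hna
  intro a b
  obtain ⟨m, rfl⟩ := (Subgroup.mem_zpowers_iff).mp (h ▸ Subgroup.mem_top a)
  obtain ⟨n, rfl⟩ := (Subgroup.mem_zpowers_iff).mp (h ▸ Subgroup.mem_top b)
  rw [← zpow_add, ← zpow_add, add_comm]

lemma closure_pair_inv_ne_top {G : Type*} [Group G] [IsSimpleGroup G]
    (hna : ¬ ∀ a b : G, a * b = b * a) {x y : G} (hx : x * x = 1) (hy : y * y = 1) :
    Subgroup.closure {x, y} ≠ ⊤ := by
  intro htop
  have hxinv : x⁻¹ = x := inv_eq_of_mul_eq_one_left hx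
  have hyinv : y⁻¹ = y := inv_eq_of_mul_eq_one_left hy
  set z := x * y with hz
  set N := Subgroup.zpowers z with hN
  have hconjx : x * z * x⁻¹ = z⁻¹ := by
    rw [hz, hxinv, mul_inv_rev, hxinv, hyinv]
    calc x * (x * y) * x = (x * x) * (y * x) := by group
    _ = y * x := by rw [hx, one_mul]
  have hconjy : y * z * y⁻¹ = z⁻¹ := by
    rw [hz, hyinv, mul_inv_rev, hxinv, hyinv]
    calc y * (x * y) * y = (y * x) * (y * y) := by group
    _ = y * x := by rw [hy, mul_one]
  have key : ∀ g : G, g⁻¹ = g → g * z * g⁻¹ = z⁻¹ → g ∈ normalizer (N : Set G) := by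
    intro g hg hc
    have hmem : ∀ h ∈ N, g * h * g⁻¹ ∈ N := by
      intro h hh
      obtain ⟨n, rfl⟩ := Subgroup.mem_zpowers_iff.mp hh
      rw [← conj_zpow, hc]
      exact Subgroup.zpow_mem _ (Subgroup.inv_mem _ (Subgroup.mem_zpowers z)) n
    rw [Subgroup.mem_normalizer_iff]
    intro h
    constructor
    · exact fun hh => hmem h hh
    · intro hh
      have := hmem _ hh
      have hgg : g * g = 1 := mul_eq_one_iff_inv_eq.mpr hg
      have he : g * (g * h * g⁻¹) * g⁻¹ = h := by
        rw [hg]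
        calc g * (g * h * g) * g = (g * g) * h * (g * g) := by group
        _ = h := by rw [hgg, one_mul, mul_one]
      rwa [he] at this
  have hnorm : normalizer (N : Set G) = ⊤ := by
    rw [eq_top_iff, ← htop]
    exact Subgroup.closure_le _ |>.mpr (by
      rintro g (rfl | rfl)
      · exact key _ hxinv hconjx
      · exact key _ hyinv hconjy)
  have hnormal : N.Normal := Subgroup.normalizer_eq_top_iff.mp hnorm
  rcases hnormal.eq_bot_or_eq_top with hb | ht
  · -- z = 1, so y = x, closure = zpowers x
    have hz1 : z = 1 := by
      have h1 : z ∈ N := Subgroup.mem_zpowers z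
      rw [hb, Subgroup.mem_bot] at h1; exact h1
    have hyx : y = x := by
      have hxy : x * y = 1 := hz1
      rw [← hxinv]
      exact eq_inv_of_mul_eq_one_right hxy
    apply zpowers_ne_top_aux hna x
    rw [Subgroup.zpowers_eq_closure, ← htop, hyx, Set.pair_eq_singleton]
  · exact zpowers_ne_top_aux hna z (hN ▸ ht)

lemma exists_involution_of_even {G : Type*} [Group G] [Finite G] {M : Subgroup G}
    (he : Even (Nat.card M)) : ∃ x : G, x ∈ M ∧ x * x = 1 ∧ x ≠ 1 := by
  haveI : Fact (Nat.Prime 2) := ⟨Nat.prime_two⟩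
  obtain ⟨x, hx⟩ := exists_prime_orderOf_dvd_card' (G := M) 2 he.two_dvd
  refine ⟨(x : G), x.2, ?_, ?_⟩
  · have h1 : orderOf (x : G) = 2 := by rw [← Subgroup.orderOf_coe] at hx; exact hx
    have := pow_orderOf_eq_one (x : G)
    rwa [h1, pow_two] at this
  · intro h
    have h1 : orderOf (x : G) = 2 := by rw [← Subgroup.orderOf_coe] at hx; exact hx
    rw [h, orderOf_one] at h1
    exact absurd h1 (by norm_num)

/-- Let `G` be a non-abelian finite simple group and let `M₁` and `M₂` be distinct maximal
subgroups of `G`, each of even order. Then `M₁` and `M₂` are vertices of the intersection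
graph `Δ_G` and `d(M₁, M₂) ≤ 2`. -/
theorem dist_le_two_of_maximal_even
    (G : Type*) [Group G] [Finite G] [IsSimpleGroup G]
    (hna : ¬ ∀ a b : G, a * b = b * a)
    (M₁ M₂ : Subgroup G) (hM₁ : IsCoatom M₁) (hM₂ : IsCoatom M₂) (hne : M₁ ≠ M₂)
    (he₁ : Even (Nat.card M₁)) (he₂ : Even (Nat.card M₂)) :
    ∃ (hv₁ : M₁ ≠ ⊥ ∧ M₁ ≠ ⊤) (hv₂ : M₂ ≠ ⊥ ∧ M₂ ≠ ⊤),
      (intersectionGraph G).dist ⟨M₁, hv₁⟩ ⟨M₂, hv₂⟩ ≤ 2 := by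
  have hbot₁ : M₁ ≠ ⊥ := by
    intro h; rw [h] at he₁; simp at he₁
  have hbot₂ : M₂ ≠ ⊥ := by
    intro h; rw [h] at he₂; simp at he₂
  refine ⟨⟨hbot₁, hM₁.1⟩, ⟨hbot₂, hM₂.1⟩, ?_⟩
  obtain ⟨x, hxM, hx2, hx1⟩ := exists_involution_of_even he₁
  obtain ⟨y, hyM, hy2, hy1⟩ := exists_involution_of_even he₂
  by_cases hint : M₁ ⊓ M₂ = ⊥
  · -- distance 2 via H = closure {x, y}
    set H := Subgroup.closure ({x, y} : Set G) with hH
    have hxH : x ∈ H := Subgroup.subset_closure (Set.mem_insert _ _)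
    have hyH : y ∈ H := Subgroup.subset_closure (Set.mem_insert_of_mem _ rfl)
    have hHtop : H ≠ ⊤ := closure_pair_inv_ne_top hna hx2 hy2
    have hHbot : H ≠ ⊥ := by
      intro h; rw [h, Subgroup.mem_bot] at hxH; exact hx1 hxH
    have hHM₁ : H ≠ M₁ := by
      intro h
      rw [h] at hyH
      have : y ∈ M₁ ⊓ M₂ := ⟨hyH, hyM⟩
      rw [hint, Subgroup.mem_bot] at this
      exact hy1 this
    have hHM₂ : H ≠ M₂ := by
      intro h
      rw [h] at hxH
      have : x ∈ M₁ ⊓ M₂ := ⟨hxM, hxH⟩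
      rw [hint, Subgroup.mem_bot] at this
      exact hx1 this
    have adj1 : (intersectionGraph G).Adj ⟨M₁, hbot₁, hM₁.1⟩ ⟨H, hHbot, hHtop⟩ := by
      refine ⟨?_, ?_⟩
      · intro h
        exact hHM₁ (congrArg Subtype.val h).symm
      · intro h
        have : x ∈ M₁ ⊓ H := ⟨hxM, hxH⟩
        rw [h, Subgroup.mem_bot] at this
        exact hx1 this
    have adj2 : (intersectionGraph G).Adj ⟨H, hHbot, hHtop⟩ ⟨M₂, hbot₂, hM₂.1⟩ := by
      refine ⟨?_, ?_⟩
      · intro h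
        exact hHM₂ (congrArg Subtype.val h)
      · intro h
        have : y ∈ H ⊓ M₂ := ⟨hyH, hyM⟩
        rw [h, Subgroup.mem_bot] at this
        exact hy1 this
    have h2 := SimpleGraph.dist_le (SimpleGraph.Walk.cons adj1 (SimpleGraph.Walk.cons adj2 SimpleGraph.Walk.nil))
    simpa using h2
  · -- adjacent
    have adj : (intersectionGraph G).Adj ⟨M₁, hbot₁, hM₁.1⟩ ⟨M₂, hbot₂, hM₂.1⟩ := by
      refine ⟨?_, hint⟩
      intro h
      exact hne (congrArg Subtype.val h)
    have h2 := SimpleGraph.dist_le adj.toWalk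
    have hl : adj.toWalk.length = 1 := rfl
    rw [hl] at h2
    exact h2.trans one_le_two
end
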